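/- arXiv:1801.03200 — 3 statements merged into one kernel-verified Lean document; each statement's English description precedes it below -/
import Mathlib

section
/- Let nmExt : {0,1}^n × {0,1}^d → {0,1} be a (k,ε)-non-malleable extractor, let X = {x_1,…,x_K} ⊆ {0,1}^n be any subset of size K = 2^k, and for each seed s ∈ {0,1}^d let w^{(s)} = (nmExt(x_i,s))_{i∈[K]} ∈ {0,1}^K be the evaluation vector of s. Then there exists a subset S ⊆ {0,1}^d of size 2^{d−1} such that for every two distinct s, s' ∈ S it holds that dist(w^{(s)}, w^{(s')}) ≥ 1/2 − 2ε. -/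
open Finset

/-- Total variation distance between two distributions on a finite type,
defined as the supremum over events of the difference of probabilities. -/
noncomputable def tvDist {Ω : Type*} [Fintype Ω] (p q : Ω → ℝ) : ℝ :=
  ⨆ S : Finset Ω, |∑ ω ∈ S, p ω - ∑ ω ∈ S, q ω|

/-- Distribution of `f a` when `a` is drawn uniformly from the finite set `A`. -/
noncomputable def unifPush {α Ω : Type*} [DecidableEq Ω] (A : Finset α) (f : α → Ω) :
    Ω → ℝ :=
  fun ω => ((A.filter fun a => f a = ω).card : ℝ) / (A.card : ℝ)

/-- An adversarial function: a map on seeds with no fixed points. -/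
def Adversarial {d : ℕ} (A : (Fin d → Bool) → (Fin d → Bool)) : Prop :=
  ∀ s, A s ≠ s

/-- Distribution of the tuple `(nmExt(X,U_d), nmExt(X,A(U_d)), U_d)` for `X` uniform
on the finset `X` and `U_d` an independent uniform seed. -/
noncomputable def realDist {n d : ℕ} (nmExt : (Fin n → Bool) → (Fin d → Bool) → Bool)
    (X : Finset (Fin n → Bool)) (A : (Fin d → Bool) → (Fin d → Bool)) :
    Bool × Bool × (Fin d → Bool) → ℝ :=
  unifPush (X ×ˢ (Finset.univ : Finset (Fin d → Bool)))
    (fun p => (nmExt p.1 p.2, nmExt p.1 (A p.2), p.2))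

/-- Distribution of the tuple `(U_1, nmExt(X,A(U_d)), U_d)`, with `U_1` a uniform bit
independent of `X` and `U_d`. -/
noncomputable def idealDist {n d : ℕ} (nmExt : (Fin n → Bool) → (Fin d → Bool) → Bool)
    (X : Finset (Fin n → Bool)) (A : (Fin d → Bool) → (Fin d → Bool)) :
    Bool × Bool × (Fin d → Bool) → ℝ :=
  unifPush ((Finset.univ : Finset Bool) ×ˢ X ×ˢ (Finset.univ : Finset (Fin d → Bool)))
    (fun p => (p.1, nmExt p.2.1 (A p.2.2), p.2.2))

/-- `nmExt` is a `(k,ε)`-non-malleable extractor: for every flat `(n,k)`-source `X`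
and every adversarial function `A`, the real and ideal distributions are `ε`-close
in total variation distance. -/
def IsNonMalleableExtractor (n k d : ℕ) (ε : ℝ)
    (nmExt : (Fin n → Bool) → (Fin d → Bool) → Bool) : Prop :=
  ∀ X : Finset (Fin n → Bool), X.card = 2 ^ k →
    ∀ A : (Fin d → Bool) → (Fin d → Bool), Adversarial A →
      tvDist (realDist nmExt X A) (idealDist nmExt X A) ≤ ε

lemma sum_unifPush {α Ω : Type*} [DecidableEq Ω] (D : Finset α) (f : α → Ω)
    (E : Finset Ω) :
    ∑ ω ∈ E, unifPush D f ω = ((D.filter fun a => f a ∈ E).card : ℝ) / (D.card : ℝ) := by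
  classical
  unfold unifPush
  rw [← Finset.sum_div]
  congr 1
  rw [← Nat.cast_sum]
  congr 1
  rw [Finset.card_eq_sum_card_fiberwise (f := f) (s := D.filter fun a => f a ∈ E) (t := E)
    (fun a ha => (Finset.mem_filter.mp ha).2)]
  refine Finset.sum_congr rfl fun ω hω => ?_
  congr 1
  rw [Finset.filter_filter]
  refine Finset.filter_congr fun a _ => ?_
  constructor
  · intro h; exact ⟨h ▸ hω, h⟩
  · intro h; exact h.2

lemma le_tvDist {Ω : Type*} [Fintype Ω] (p q : Ω → ℝ) (E : Finset Ω) :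
    |∑ ω ∈ E, p ω - ∑ ω ∈ E, q ω| ≤ tvDist p q := by
  unfold tvDist
  exact le_ciSup (f := fun S : Finset Ω => |∑ ω ∈ S, p ω - ∑ ω ∈ S, q ω|)
    (Set.Finite.bddAbove (Set.finite_range _)) E

lemma tvDist_nonneg {Ω : Type*} [Fintype Ω] (p q : Ω → ℝ) : 0 ≤ tvDist p q := by
  have := le_tvDist p q ∅
  simpa using this

/-- If `nmExt` is a `(k,ε)`-non-malleable extractor and `x₁,…,x_K` (given by the
injective enumeration `x : Fin 2^k → {0,1}^n`) is any subset of `{0,1}^n` of size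
`K = 2^k`, with evaluation vectors `w⁽ˢ⁾ = (nmExt(xᵢ,s))ᵢ`, then there is a set `S`
of `2^{d−1}` seeds whose evaluation vectors are pairwise `(1/2 − 2ε)`-far in
relative Hamming distance. -/
theorem nmExt_good_seed_set (n k d : ℕ) (ε : ℝ)
    (nmExt : (Fin n → Bool) → (Fin d → Bool) → Bool)
    (x : Fin (2 ^ k) → (Fin n → Bool)) (hx : Function.Injective x)
    (hnm : IsNonMalleableExtractor n k d ε nmExt) :
    ∃ S : Finset (Fin d → Bool), S.card = 2 ^ (d - 1) ∧
      ∀ s ∈ S, ∀ s' ∈ S, s ≠ s' →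
        (hammingDist (fun i => nmExt (x i) s) (fun i => nmExt (x i) s') : ℝ) /
            ((2 : ℝ) ^ k) ≥ 1 / 2 - 2 * ε := by
  classical
  rcases Nat.eq_zero_or_pos d with hd | hd
  · subst hd
    refine ⟨Finset.univ, by simp, ?_⟩
    intro s hs s' hs' hne
    exact absurd (funext fun i => i.elim0) hne
  -- main case d ≥ 1
  set w : (Fin d → Bool) → Fin (2 ^ k) → Bool := fun s i => nmExt (x i) s with hw
  set bad : (Fin d → Bool) → (Fin d → Bool) → Prop :=
    fun s s' => s ≠ s' ∧ ((hammingDist (w s) (w s') : ℝ) / (2 : ℝ) ^ k < 1 / 2 - 2 * ε)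
    with hbad
  set B : Finset (Fin d → Bool) := Finset.univ.filter (fun s => ∃ s', bad s s') with hB
  -- the key cardinality bound
  have hBcard : 2 * B.card ≤ 2 ^ d := by
    rcases Finset.eq_empty_or_nonempty B with hBe | hBne
    · simp [hBe]
    by_contra hcon
    push_neg at hcon
    -- the adversarial function
    set A : (Fin d → Bool) → (Fin d → Bool) :=
      fun s => if h : ∃ s', bad s s' then Classical.choose h else (fun i => ! s i) with hA
    have hAbad : ∀ s ∈ B, bad s (A s) := by
      intro s hs
      rw [hB, Finset.mem_filter] at hs
      simp only [hA, dif_pos hs.2]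
      exact Classical.choose_spec hs.2
    have hAadv : Adversarial A := by
      intro s
      by_cases h : ∃ s', bad s s'
      · simp only [hA, dif_pos h]
        exact fun he => (Classical.choose_spec h).1 he.symm
      · simp only [hA, dif_neg h]
        intro hcontra
        have := congrFun hcontra ⟨0, hd⟩
        simp at this
    set X : Finset (Fin n → Bool) := Finset.univ.image x with hXdef
    have hXcard : X.card = 2 ^ k := by
      rw [hXdef, Finset.card_image_of_injective _ hx, Finset.card_univ, Fintype.card_fin]
    have htv := hnm X hXcard A hAadv
    set E : Finset (Bool × Bool × (Fin d → Bool)) :=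
      Finset.univ.filter (fun p => p.2.2 ∈ B ∧ p.1 = p.2.1) with hE
    -- counting agreements
    have hcount_eq : ∀ s s' : Fin d → Bool,
        (X.filter (fun a => nmExt a s = nmExt a s')).card
          = 2 ^ k - hammingDist (w s) (w s') := by
      intro s s'
      have h1 : X.filter (fun a => nmExt a s = nmExt a s')
          = (Finset.univ.filter (fun i => nmExt (x i) s = nmExt (x i) s')).image x := by
        rw [hXdef, Finset.filter_image]
      rw [h1, Finset.card_image_of_injective _ hx]
      have h2 := Finset.card_filter_add_card_filter_not
        (s := (Finset.univ : Finset (Fin (2 ^ k))))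
        (p := fun i => nmExt (x i) s = nmExt (x i) s')
      have h3 : hammingDist (w s) (w s')
          = (Finset.univ.filter
              (fun i => ¬ (nmExt (x i) s = nmExt (x i) s'))).card := by
        simp only [hw, hammingDist]
      rw [Finset.card_univ, Fintype.card_fin] at h2
      omega
    have hDle : ∀ s s' : Fin d → Bool, hammingDist (w s) (w s') ≤ 2 ^ k := by
      intro s s'
      have := hammingDist_le_card_fintype (x := w s) (y := w s')
      simpa using this
    -- real count
    have hmemE : ∀ p : Bool × Bool × (Fin d → Bool),
        p ∈ E ↔ (p.2.2 ∈ B ∧ p.1 = p.2.1) := by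
      intro p; simp [hE]
    have hNreal : ((X ×ˢ (Finset.univ : Finset (Fin d → Bool))).filter
        (fun p => (nmExt p.1 p.2, nmExt p.1 (A p.2), p.2) ∈ E)).card
        = ∑ s ∈ B, (2 ^ k - hammingDist (w s) (w (A s))) := by
      rw [Finset.card_filter, Finset.sum_product, Finset.sum_comm]
      have hinner : ∀ s : Fin d → Bool,
          (∑ a ∈ X, if (nmExt a s, nmExt a (A s), s) ∈ E then 1 else 0)
            = if s ∈ B then (2 ^ k - hammingDist (w s) (w (A s))) else 0 := by
        intro s
        by_cases hs : s ∈ B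
        · rw [if_pos hs, ← hcount_eq s (A s), Finset.card_filter]
          refine Finset.sum_congr rfl fun a _ => ?_
          have hm := hmemE (nmExt a s, nmExt a (A s), s)
          simp only [hm, hs, true_and]
        · rw [if_neg hs]
          refine Finset.sum_eq_zero fun a _ => ?_
          rw [if_neg]
          rw [hmemE]
          exact fun hc => hs hc.1
      rw [Finset.sum_congr rfl (fun s _ => hinner s), Finset.sum_ite_mem,
        Finset.univ_inter]
    -- ideal count
    have hNideal : (((Finset.univ : Finset Bool) ×ˢ X ×ˢ
          (Finset.univ : Finset (Fin d → Bool))).filter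
        (fun p => (p.1, nmExt p.2.1 (A p.2.2), p.2.2) ∈ E)).card
        = 2 ^ k * B.card := by
      rw [Finset.card_filter, Finset.sum_product, Finset.sum_comm, Finset.sum_product]
      have hinner : ∀ (a : Fin n → Bool) (s : Fin d → Bool),
          (∑ b : Bool, if (b, nmExt a (A s), s) ∈ E then 1 else 0)
            = if s ∈ B then 1 else 0 := by
        intro a s
        by_cases hs : s ∈ B
        · rw [if_pos hs]
          have : ∀ b : Bool, ((b, nmExt a (A s), s) ∈ E) ↔ (b = nmExt a (A s)) := by
            intro b
            rw [hmemE]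
            simp [hs]
          simp only [this]
          simp
        · rw [if_neg hs]
          refine Finset.sum_eq_zero fun b _ => ?_
          rw [if_neg]
          rw [hmemE]
          exact fun hc => hs hc.1
      calc (∑ a ∈ X, ∑ s : Fin d → Bool, ∑ b : Bool,
              if (b, nmExt a (A s), s) ∈ E then 1 else 0)
          = ∑ a ∈ X, ∑ s : Fin d → Bool, if s ∈ B then 1 else 0 := by
            refine Finset.sum_congr rfl fun a _ => Finset.sum_congr rfl fun s _ => hinner a s
        _ = ∑ a ∈ X, B.card := by
            refine Finset.sum_congr rfl fun a _ => ?_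
            rw [Finset.sum_ite_mem, Finset.univ_inter, Finset.sum_const, smul_eq_mul,
              mul_one]
        _ = 2 ^ k * B.card := by
            rw [Finset.sum_const, smul_eq_mul, hXcard]
    -- sum values
    have hRsum : ∑ ω ∈ E, realDist nmExt X A ω
        = ((∑ s ∈ B, (2 ^ k - hammingDist (w s) (w (A s))) : ℕ) : ℝ)
          / ((2 : ℝ) ^ k * (2 : ℝ) ^ d) := by
      unfold realDist
      rw [sum_unifPush, hNreal]
      congr 1
      rw [Finset.card_product, hXcard, Finset.card_univ]
      push_cast
      simp
    have hIsum : ∑ ω ∈ E, idealDist nmExt X A ω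
        = ((2 : ℝ) ^ k * (B.card : ℝ)) / (2 * ((2 : ℝ) ^ k * (2 : ℝ) ^ d)) := by
      unfold idealDist
      rw [sum_unifPush, hNideal]
      rw [Finset.card_product, Finset.card_product, hXcard, Finset.card_univ,
        Finset.card_univ]
      push_cast
      simp
    -- inequalities
    set R := ∑ ω ∈ E, realDist nmExt X A ω with hR
    set I := ∑ ω ∈ E, idealDist nmExt X A ω with hI
    have hε0 : 0 ≤ ε := le_trans (tvDist_nonneg _ _) htv
    have hεRI : R - I ≤ ε := by
      have h1 := le_tvDist (realDist nmExt X A) (idealDist nmExt X A) E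
      have h1' : |R - I| ≤ tvDist (realDist nmExt X A) (idealDist nmExt X A) := by
        rw [hR, hI]; exact h1
      have h2 := le_abs_self (R - I)
      linarith
    have hP : (0:ℝ) < (2 : ℝ) ^ k := by positivity
    have hD2 : (0:ℝ) < (2 : ℝ) ^ d := by positivity
    -- lower bound on the real sum
    have hterm : ∀ s ∈ B,
        ((1:ℝ)/2 + 2*ε) * (2:ℝ)^k
          < (((2 ^ k - hammingDist (w s) (w (A s)) : ℕ)) : ℝ) := by
      intro s hs
      have hb := (hAbad s hs).2
      rw [div_lt_iff₀ hP] at hb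
      rw [Nat.cast_sub (hDle s (A s))]
      push_cast
      linarith
    have hRlb : (B.card : ℝ) * (((1:ℝ)/2 + 2*ε) * (2:ℝ)^k)
        < ((∑ s ∈ B, (2 ^ k - hammingDist (w s) (w (A s))) : ℕ) : ℝ) := by
      rw [Nat.cast_sum]
      calc (B.card : ℝ) * (((1:ℝ)/2 + 2*ε) * (2:ℝ)^k)
          = ∑ _s ∈ B, ((1:ℝ)/2 + 2*ε) * (2:ℝ)^k := by
            rw [Finset.sum_const, nsmul_eq_mul]
        _ < _ := Finset.sum_lt_sum_of_nonempty hBne hterm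
    have hRgt : (B.card : ℝ) * (((1:ℝ)/2 + 2*ε) * (2:ℝ)^k) / ((2:ℝ)^k * (2:ℝ)^d) < R := by
      rw [hRsum]
      exact div_lt_div_of_pos_right hRlb (by positivity)
    have hsimp : (B.card : ℝ) * (((1:ℝ)/2 + 2*ε) * (2:ℝ)^k) / ((2:ℝ)^k * (2:ℝ)^d)
        - ((2 : ℝ) ^ k * (B.card : ℝ)) / (2 * ((2 : ℝ) ^ k * (2 : ℝ) ^ d))
        = 2 * ε * (B.card : ℝ) / (2:ℝ)^d := by
      field_simp
      ring
    have hkey : 2 * ε * (B.card : ℝ) / (2:ℝ)^d < ε := by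
      linarith [hRgt, hεRI, hsimp, hIsum]
    rw [div_lt_iff₀ hD2] at hkey
    have hcon' : ((2:ℝ)^d) < 2 * (B.card : ℝ) := by
      have := hcon
      have h := (Nat.cast_lt (α := ℝ)).mpr hcon
      push_cast at h
      linarith
    nlinarith [mul_nonneg hε0 (by linarith : (0:ℝ) ≤ 2 * (B.card : ℝ) - (2:ℝ)^d)]
  -- conclude
  have hcompl : 2 ^ (d - 1) ≤ Bᶜ.card := by
    rw [Finset.card_compl]
    have hcard : Fintype.card (Fin d → Bool) = 2 ^ d := by simp
    have h2 : 2 ^ d = 2 * 2 ^ (d - 1) := by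
      rw [← pow_succ']
      congr 1
      omega
    omega
  obtain ⟨S, hSsub, hScard⟩ := Finset.exists_subset_card_eq hcompl
  refine ⟨S, hScard, ?_⟩
  intro s hs s' hs' hne
  have hsB : s ∈ Bᶜ := hSsub hs
  rw [Finset.mem_compl, hB, Finset.mem_filter] at hsB
  push_neg at hsB
  have hnotbad := hsB (Finset.mem_univ s) s'
  simp only [hbad, not_and, hw] at hnotbad
  have := hnotbad hne
  push_neg at this
  simpa using this
end

section
/- Fix a constant c ∈ (0, 1/20) and let ε ∈ (0, c). Let n be an integer with n > c/ε², and let C ⊆ {0,1}^n be a code with relative distance at least 1/2 − ε (i.e., any two distinct codewords differ in at least a (1/2 − ε)-fraction of coordinates). Then |C| < 2^{(23/c)·ε²·log₂(1/ε)·n}. -/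
open Finset
open scoped symmDiff

namespace RefinedMRRW

variable {n : ℕ}

/-- The character attached to a subset `S` of coordinates. -/
noncomputable def chi (S : Finset (Fin n)) (x : Fin n → Bool) : ℝ :=
  ∏ i ∈ S, (if x i then (-1 : ℝ) else 1)

lemma chi_empty (x : Fin n → Bool) : chi (∅ : Finset (Fin n)) x = 1 := by
  simp [chi]

lemma chi_mul (S T : Finset (Fin n)) (x : Fin n → Bool) :
    chi S x * chi T x = chi (S ∆ T) x := by
  classical
  set f : Fin n → ℝ := fun i => if x i then (-1 : ℝ) else 1 with hf
  have hfsq : ∀ i, f i * f i = 1 := by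
    intro i; by_cases h : x i <;> simp [hf, h]
  have hS : chi S x = (∏ i ∈ S \ T, f i) * ∏ i ∈ S ∩ T, f i := by
    rw [chi, ← Finset.prod_union (Finset.disjoint_sdiff_inter S T),
      Finset.sdiff_union_inter]
  have hT : chi T x = (∏ i ∈ T \ S, f i) * ∏ i ∈ S ∩ T, f i := by
    rw [chi, Finset.inter_comm S T, ← Finset.prod_union (Finset.disjoint_sdiff_inter T S),
      Finset.sdiff_union_inter]
  have hST : chi (S ∆ T) x = (∏ i ∈ S \ T, f i) * ∏ i ∈ T \ S, f i := by
    rw [chi, symmDiff_def, Finset.sup_eq_union, Finset.prod_union disjoint_sdiff_sdiff]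
  have hsq : (∏ i ∈ S ∩ T, f i) * (∏ i ∈ S ∩ T, f i) = 1 := by
    rw [← Finset.prod_mul_distrib]
    exact Finset.prod_eq_one fun i _ => hfsq i
  calc chi S x * chi T x
      = ((∏ i ∈ S \ T, f i) * ∏ i ∈ T \ S, f i) *
        ((∏ i ∈ S ∩ T, f i) * (∏ i ∈ S ∩ T, f i)) := by rw [hS, hT]; ring
    _ = chi (S ∆ T) x := by rw [hsq, hST, mul_one]

lemma chi_self (S : Finset (Fin n)) (x : Fin n → Bool) : chi S x * chi S x = 1 := by
  rw [chi_mul, symmDiff_self, Finset.bot_eq_empty, chi_empty]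

lemma sum_chi_singleton (x y : Fin n → Bool) :
    ∑ i : Fin n, chi {i} x * chi {i} y = (n : ℝ) - 2 * hammingDist x y := by
  classical
  have h1 : ∀ i : Fin n, chi {i} x * chi {i} y
      = 1 - 2 * (if x i ≠ y i then (1:ℝ) else 0) := by
    intro i
    simp only [chi, Finset.prod_singleton]
    by_cases hx : x i <;> by_cases hy : y i <;> simp [hx, hy] <;> norm_num
  rw [Finset.sum_congr rfl fun i _ => h1 i]
  rw [Finset.sum_sub_distrib, Finset.sum_const, ← Finset.mul_sum, Finset.sum_boole]
  have : hammingDist x y = (Finset.univ.filter fun i => x i ≠ y i).card := rfl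
  rw [this]
  simp [Finset.card_univ]



/-- Symmetric-difference with a fixed set, as an equivalence. -/
def sdE (A : Finset (Fin n)) : Finset (Fin n) ≃ Finset (Fin n) where
  toFun U := A ∆ U
  invFun U := A ∆ U
  left_inv U := symmDiff_symmDiff_cancel_left A U
  right_inv U := symmDiff_symmDiff_cancel_left A U

noncomputable def Phi (k : Finset (Fin n) → ℝ) (x y : Fin n → Bool) : ℝ :=
  ∑ S : Finset (Fin n), k S * (chi S x * chi S y)

noncomputable def conv (k w : Finset (Fin n) → ℝ) (U : Finset (Fin n)) : ℝ :=
  ∑ S : Finset (Fin n), k S * w (S ∆ U)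

noncomputable def Xc (C : Finset (Fin n → Bool)) (U : Finset (Fin n)) : ℝ :=
  ∑ x ∈ C, chi U x

lemma Phi_mul (k w : Finset (Fin n) → ℝ) (x y : Fin n → Bool) :
    Phi k x y * Phi w x y = Phi (conv k w) x y := by
  classical
  have hR : Phi (conv k w) x y
      = ∑ S : Finset (Fin n), ∑ U : Finset (Fin n),
          k S * w (S ∆ U) * (chi U x * chi U y) := by
    rw [Phi]
    have : ∀ U : Finset (Fin n), conv k w U * (chi U x * chi U y)
        = ∑ S : Finset (Fin n), k S * w (S ∆ U) * (chi U x * chi U y) := by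
      intro U; rw [conv, Finset.sum_mul]
    rw [Finset.sum_congr rfl fun U _ => this U]
    exact Finset.sum_comm
  rw [hR, Phi, Phi, Finset.sum_mul_sum]
  refine Finset.sum_congr rfl fun S _ => ?_
  rw [← Equiv.sum_comp (sdE S)
    (fun U => k S * w (S ∆ U) * (chi U x * chi U y))]
  refine Finset.sum_congr rfl fun V _ => ?_
  show k S * (chi S x * chi S y) * (w V * (chi V x * chi V y))
      = k S * w (S ∆ (S ∆ V)) * (chi (S ∆ V) x * chi (S ∆ V) y)
  rw [symmDiff_symmDiff_cancel_left, ← chi_mul S V x, ← chi_mul S V y]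
  ring

lemma sum_Phi (C : Finset (Fin n → Bool)) (k : Finset (Fin n) → ℝ) :
    ∑ x ∈ C, ∑ y ∈ C, Phi k x y = ∑ U : Finset (Fin n), k U * (Xc C U) ^ 2 := by
  classical
  simp only [Phi]
  calc ∑ x ∈ C, ∑ y ∈ C, ∑ U : Finset (Fin n), k U * (chi U x * chi U y)
      = ∑ x ∈ C, ∑ U : Finset (Fin n), ∑ y ∈ C, k U * (chi U x * chi U y) :=
        Finset.sum_congr rfl fun x _ => Finset.sum_comm
    _ = ∑ U : Finset (Fin n), ∑ x ∈ C, ∑ y ∈ C, k U * (chi U x * chi U y) :=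
        Finset.sum_comm
    _ = ∑ U : Finset (Fin n), k U * (Xc C U) ^ 2 := by
        refine Finset.sum_congr rfl fun U _ => ?_
        rw [Xc, sq, Finset.sum_mul_sum, Finset.mul_sum]
        refine Finset.sum_congr rfl fun x _ => ?_
        rw [Finset.mul_sum]

noncomputable def d1 : Finset (Fin n) → ℝ := fun U => if U.card = 1 then 1 else 0

lemma sum_card_one (v : Finset (Fin n) → ℝ) :
    ∑ U : Finset (Fin n), d1 U * v U = ∑ i : Fin n, v {i} := by
  classical
  have h1 : ∑ U : Finset (Fin n), d1 U * v U
      = ∑ U ∈ Finset.univ.filter (fun U : Finset (Fin n) => U.card = 1), v U := by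
    rw [Finset.sum_filter]
    refine Finset.sum_congr rfl fun U _ => ?_
    by_cases h : U.card = 1 <;> simp [d1, h]
  have h2 : Finset.univ.filter (fun U : Finset (Fin n) => U.card = 1)
      = Finset.univ.image (fun i : Fin n => ({i} : Finset (Fin n))) := by
    ext U
    simp only [Finset.mem_filter, Finset.mem_univ, true_and, Finset.mem_image,
      Finset.card_eq_one]
    aesop
  rw [h1, h2, Finset.sum_image]
  intro i _ j _ h
  exact Finset.singleton_injective h

lemma Phi_d1 (x y : Fin n → Bool) :
    Phi d1 x y = (n : ℝ) - 2 * hammingDist x y := by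
  rw [Phi, sum_card_one (fun U => chi U x * chi U y), sum_chi_singleton]

lemma conv_nonneg' (k w : Finset (Fin n) → ℝ) (hk : ∀ S, 0 ≤ k S)
    (hw : ∀ S, 0 ≤ w S) (U : Finset (Fin n)) : 0 ≤ conv k w U :=
  Finset.sum_nonneg fun S _ => mul_nonneg (hk S) (hw _)

/-- the key spectral comparison at the level of convolution coefficients -/
lemma conv_spectral (h : Finset (Fin n) → ℝ) (hpos : ∀ S, 0 ≤ h S) (μ : ℝ)
    (hspec : ∀ W : Finset (Fin n), μ * h W ≤ ∑ i : Fin n, h (W ∆ {i}))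
    (U : Finset (Fin n)) :
    μ * conv h h U ≤ conv d1 (conv h h) U := by
  classical
  have hL : conv d1 (conv h h) U = ∑ i : Fin n, conv h h ({i} ∆ U) := by
    rw [conv]
    exact sum_card_one (fun A => conv h h (A ∆ U))
  have hswap : ∑ i : Fin n, conv h h ({i} ∆ U)
      = ∑ S : Finset (Fin n), ∑ i : Fin n, h S * h ((S ∆ U) ∆ {i}) := by
    simp only [conv]
    rw [Finset.sum_comm]
    refine Finset.sum_congr rfl fun S _ => Finset.sum_congr rfl fun i _ => ?_
    congr 2
    rw [symmDiff_comm {i} U, ← symmDiff_assoc]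
  rw [hL, hswap, conv, Finset.mul_sum]
  refine Finset.sum_le_sum fun S _ => ?_
  have h1 : μ * h (S ∆ U) ≤ ∑ i : Fin n, h ((S ∆ U) ∆ {i}) := hspec (S ∆ U)
  calc μ * (h S * h (S ∆ U)) = h S * (μ * h (S ∆ U)) := by ring
    _ ≤ h S * ∑ i : Fin n, h ((S ∆ U) ∆ {i}) :=
        mul_le_mul_of_nonneg_left h1 (hpos S)
    _ = ∑ i : Fin n, h S * h ((S ∆ U) ∆ {i}) := Finset.mul_sum _ _ _

noncomputable def hwt (r : ℕ) (a : ℝ) : Finset (Fin n) → ℝ :=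
  fun S => if S.card ≤ r then a ^ S.card else 0

lemma hwt_nonneg (r : ℕ) (a : ℝ) (ha : 0 ≤ a) (S : Finset (Fin n)) :
    0 ≤ hwt r a S := by
  unfold hwt
  split
  · exact pow_nonneg ha _
  · exact le_refl 0
  
lemma symmDiff_singleton_of_mem {W : Finset (Fin n)} {i : Fin n} (h : i ∈ W) :
    W ∆ {i} = W.erase i := by
  ext j
  simp only [Finset.mem_symmDiff, Finset.mem_singleton, Finset.mem_erase]
  constructor
  · rintro (⟨hj, hne⟩ | ⟨rfl, hni⟩)
    · exact ⟨hne, hj⟩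
    · exact absurd h hni
  · rintro ⟨hne, hj⟩; exact Or.inl ⟨hj, hne⟩

lemma symmDiff_singleton_of_not_mem {W : Finset (Fin n)} {i : Fin n} (h : i ∉ W) :
    W ∆ {i} = insert i W := by
  ext j
  simp only [Finset.mem_symmDiff, Finset.mem_singleton, Finset.mem_insert]
  constructor
  · rintro (⟨hj, _⟩ | ⟨rfl, _⟩)
    · exact Or.inr hj
    · exact Or.inl rfl
  · rintro (rfl | hj)
    · exact Or.inr ⟨rfl, h⟩
    · refine Or.inl ⟨hj, ?_⟩
      rintro rfl; exact h hj

lemma hwt_spectral (r : ℕ) (a μ : ℝ) (ha : 0 < a) (hμ : 0 ≤ μ) (hr1 : 1 ≤ r)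
    (hA : μ ≤ ((n : ℝ) - r) * a) (hB : μ * a ≤ (r : ℝ)) (W : Finset (Fin n)) :
    μ * hwt r a W ≤ ∑ i : Fin n, hwt r a (W ∆ {i}) := by
  classical
  have hterm_nonneg : ∀ i : Fin n, 0 ≤ hwt r a (W ∆ {i}) :=
    fun i => hwt_nonneg r a ha.le _
  have hsplit : ∑ i : Fin n, hwt r a (W ∆ {i})
      = ∑ i ∈ W, hwt r a (W ∆ {i}) + ∑ i ∈ Wᶜ, hwt r a (W ∆ {i}) :=
    (Finset.sum_add_sum_compl W _).symm
  have hwn : W.card ≤ n := by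
    simpa using Finset.card_le_univ W
  by_cases hcase : W.card ≤ r
  · rcases eq_or_lt_of_le hcase with heq | hlt
    · -- W.card = r : use the erase part
      have hE : ∑ i ∈ W, hwt r a (W ∆ {i}) = r * a ^ (r - 1) := by
        rw [Finset.sum_congr rfl fun i hi => ?_]
        · rw [Finset.sum_const, heq, nsmul_eq_mul]
        · rw [symmDiff_singleton_of_mem hi, hwt]
          rw [Finset.card_erase_of_mem hi, heq]
          rw [if_pos (Nat.sub_le r 1)]
      have : μ * hwt r a W = μ * a ^ W.card := by rw [hwt, if_pos hcase]
      rw [this, heq, hsplit, hE]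
      have hpow : a ^ r = a ^ (r - 1) * a := by
        conv_lhs => rw [← Nat.sub_add_cancel hr1]
        rw [pow_succ]
      have h1 : μ * a ^ r ≤ r * a ^ (r - 1) := by
        rw [hpow, ← mul_assoc]
        calc μ * a ^ (r-1) * a = (μ * a) * a ^ (r-1) := by ring
          _ ≤ r * a ^ (r - 1) :=
            mul_le_mul_of_nonneg_right hB (pow_nonneg ha.le _)
      refine h1.trans (le_add_of_nonneg_right ?_)
      exact Finset.sum_nonneg fun i _ => hterm_nonneg i
    · -- W.card < r : use the insert part
      have hI : ∑ i ∈ Wᶜ, hwt r a (W ∆ {i})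
          = ((n : ℝ) - W.card) * a ^ (W.card + 1) := by
        rw [Finset.sum_congr rfl fun i hi => ?_]
        · rw [Finset.sum_const, nsmul_eq_mul, Finset.card_compl]
          congr 1
          simp only [Fintype.card_fin]
          rw [Nat.cast_sub hwn]
        · have hni : i ∉ W := by simpa using hi
          rw [symmDiff_singleton_of_not_mem hni, hwt,
            Finset.card_insert_of_notMem hni, if_pos (Nat.succ_le_of_lt hlt)]
      have hLHS : μ * hwt r a W = μ * a ^ W.card := by rw [hwt, if_pos hcase]
      rw [hLHS, hsplit, hI]
      have h1 : μ * a ^ W.card ≤ ((n : ℝ) - W.card) * a ^ (W.card + 1) := by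
        have hrw : ((n : ℝ) - r) ≤ (n : ℝ) - W.card := by
          have : (W.card : ℝ) ≤ r := by exact_mod_cast hcase
          linarith
        calc μ * a ^ W.card ≤ (((n : ℝ) - r) * a) * a ^ W.card :=
              mul_le_mul_of_nonneg_right hA (pow_nonneg ha.le _)
          _ ≤ (((n : ℝ) - W.card) * a) * a ^ W.card := by
              have ha' : 0 ≤ a * a ^ W.card := by positivity
              calc ((n:ℝ) - r) * a * a ^ W.card = ((n:ℝ)-r) * (a * a ^ W.card) := by ring
                _ ≤ ((n:ℝ)-W.card) * (a * a ^ W.card) :=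
                    mul_le_mul_of_nonneg_right hrw ha'
                _ = ((n:ℝ) - W.card) * a * a ^ W.card := by ring
          _ = ((n : ℝ) - W.card) * a ^ (W.card + 1) := by rw [pow_succ]; ring
      refine h1.trans ?_
      refine le_add_of_nonneg_left ?_
      exact Finset.sum_nonneg fun i _ => hterm_nonneg i
  · -- W.card > r : trivial
    have : hwt r a W = 0 := by rw [hwt, if_neg hcase]
    rw [this, mul_zero]
    exact Finset.sum_nonneg fun i _ => hterm_nonneg i

lemma Xc_empty (C : Finset (Fin n → Bool)) : Xc C ∅ = (C.card : ℝ) := by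
  rw [Xc]
  rw [Finset.sum_congr rfl fun x _ => chi_empty x]
  simp

lemma core_lower (C : Finset (Fin n → Bool)) (h : Finset (Fin n) → ℝ)
    (hpos : ∀ S, 0 ≤ h S) (τ γ : ℝ) (hγ : 0 ≤ γ)
    (hspec : ∀ W : Finset (Fin n), (τ + γ) * h W ≤ ∑ i : Fin n, h (W ∆ {i})) :
    γ * conv h h ∅ * (C.card : ℝ) ^ 2
      ≤ ∑ x ∈ C, ∑ y ∈ C, (Phi d1 x y - τ) * (Phi h x y) ^ 2 := by
  classical
  have hH : ∀ U, 0 ≤ conv h h U := conv_nonneg' h h hpos hpos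
  have e2 : ∀ x y : Fin n → Bool, (Phi d1 x y - τ) * (Phi h x y) ^ 2
      = Phi (conv d1 (conv h h)) x y - τ * Phi (conv h h) x y := by
    intro x y
    rw [← Phi_mul h h, ← Phi_mul d1]
    rw [← Phi_mul h h]
    ring
  have e3 : ∑ x ∈ C, ∑ y ∈ C, (Phi d1 x y - τ) * (Phi h x y) ^ 2
      = ∑ U : Finset (Fin n),
          (conv d1 (conv h h) U - τ * conv h h U) * Xc C U ^ 2 := by
    calc ∑ x ∈ C, ∑ y ∈ C, (Phi d1 x y - τ) * (Phi h x y) ^ 2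
        = (∑ x ∈ C, ∑ y ∈ C, Phi (conv d1 (conv h h)) x y)
          - τ * ∑ x ∈ C, ∑ y ∈ C, Phi (conv h h) x y := by
          simp only [Finset.sum_congr rfl fun x _ =>
            Finset.sum_congr rfl fun y _ => e2 x y]
          rw [Finset.mul_sum, ← Finset.sum_sub_distrib]
          refine Finset.sum_congr rfl fun x _ => ?_
          rw [Finset.mul_sum, ← Finset.sum_sub_distrib]
      _ = ∑ U : Finset (Fin n),
            (conv d1 (conv h h) U - τ * conv h h U) * Xc C U ^ 2 := by
          rw [sum_Phi, sum_Phi, Finset.mul_sum, ← Finset.sum_sub_distrib]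
          refine Finset.sum_congr rfl fun U _ => ?_
          ring
  rw [e3]
  have step : ∀ U : Finset (Fin n),
      γ * (conv h h U * Xc C U ^ 2)
        ≤ (conv d1 (conv h h) U - τ * conv h h U) * Xc C U ^ 2 := by
    intro U
    have h1 := conv_spectral h hpos (τ + γ) hspec U
    have h2 : γ * conv h h U ≤ conv d1 (conv h h) U - τ * conv h h U := by
      linarith
    calc γ * (conv h h U * Xc C U ^ 2) = (γ * conv h h U) * Xc C U ^ 2 := by ring
      _ ≤ (conv d1 (conv h h) U - τ * conv h h U) * Xc C U ^ 2 :=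
          mul_le_mul_of_nonneg_right h2 (sq_nonneg _)
  have single : conv h h ∅ * Xc C ∅ ^ 2
      ≤ ∑ U : Finset (Fin n), conv h h U * Xc C U ^ 2 :=
    Finset.single_le_sum (f := fun U => conv h h U * Xc C U ^ 2)
      (fun U _ => mul_nonneg (hH U) (sq_nonneg _)) (Finset.mem_univ ∅)
  calc γ * conv h h ∅ * (C.card : ℝ) ^ 2
      = γ * (conv h h ∅ * Xc C ∅ ^ 2) := by rw [Xc_empty]; ring
    _ ≤ γ * ∑ U : Finset (Fin n), conv h h U * Xc C U ^ 2 :=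
        mul_le_mul_of_nonneg_left single hγ
    _ = ∑ U : Finset (Fin n), γ * (conv h h U * Xc C U ^ 2) := Finset.mul_sum _ _ _
    _ ≤ ∑ U : Finset (Fin n), (conv d1 (conv h h) U - τ * conv h h U) * Xc C U ^ 2 :=
        Finset.sum_le_sum fun U _ => step U

lemma Phi_diag (h : Finset (Fin n) → ℝ) (x : Fin n → Bool) :
    Phi h x x = ∑ S : Finset (Fin n), h S := by
  rw [Phi]
  refine Finset.sum_congr rfl fun S _ => ?_
  rw [chi_self, mul_one]

lemma core_upper (C : Finset (Fin n → Bool)) (h : Finset (Fin n) → ℝ) (τ : ℝ)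
    (hτn : τ ≤ (n : ℝ))
    (hd : ∀ x ∈ C, ∀ y ∈ C, x ≠ y → Phi d1 x y ≤ τ) :
    ∑ x ∈ C, ∑ y ∈ C, (Phi d1 x y - τ) * (Phi h x y) ^ 2
      ≤ (C.card : ℝ) * (((n : ℝ) - τ) * (∑ S : Finset (Fin n), h S) ^ 2) := by
  classical
  have diag : ∀ x ∈ C, (Phi d1 x x - τ) * (Phi h x x) ^ 2
      = ((n : ℝ) - τ) * (∑ S : Finset (Fin n), h S) ^ 2 := by
    intro x _
    rw [Phi_d1, Phi_diag h, hammingDist_self]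
    push_cast
    ring
  have hrow : ∀ x ∈ C, ∑ y ∈ C, (Phi d1 x y - τ) * (Phi h x y) ^ 2
      ≤ ((n : ℝ) - τ) * (∑ S : Finset (Fin n), h S) ^ 2 := by
    intro x hx
    rw [← Finset.add_sum_erase C _ hx]
    rw [diag x hx]
    refine add_le_of_nonpos_right (Finset.sum_nonpos fun y hy => ?_)
    have hyC : y ∈ C := Finset.mem_of_mem_erase hy
    have hne : y ≠ x := Finset.ne_of_mem_erase hy
    have h1 : Phi d1 x y - τ ≤ 0 := by
      have := hd x hx y hyC (fun hxy => hne hxy.symm)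
      linarith
    exact mul_nonpos_of_nonpos_of_nonneg h1 (sq_nonneg _)
  calc ∑ x ∈ C, ∑ y ∈ C, (Phi d1 x y - τ) * (Phi h x y) ^ 2
      ≤ ∑ _x ∈ C, ((n : ℝ) - τ) * (∑ S : Finset (Fin n), h S) ^ 2 :=
        Finset.sum_le_sum hrow
    _ = (C.card : ℝ) * (((n : ℝ) - τ) * (∑ S : Finset (Fin n), h S) ^ 2) := by
        rw [Finset.sum_const, nsmul_eq_mul]

lemma conv_self_empty_ge_one (r : ℕ) (a : ℝ) (ha : 0 ≤ a) :
    (1 : ℝ) ≤ conv (hwt r a) (hwt r a) (∅ : Finset (Fin n)) := by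
  classical
  have h1 : ∀ S : Finset (Fin n), hwt r a S * hwt r a (S ∆ ∅) = hwt r a S ^ 2 := by
    intro S
    have : S ∆ (∅ : Finset (Fin n)) = S := by
      rw [← Finset.bot_eq_empty, symmDiff_bot]
    rw [this, sq]
  rw [conv, Finset.sum_congr rfl fun S _ => h1 S]
  have h2 : hwt r a (∅ : Finset (Fin n)) ^ 2 = 1 := by
    rw [hwt]
    simp
  calc (1:ℝ) = hwt r a (∅ : Finset (Fin n)) ^ 2 := h2.symm
    _ ≤ ∑ S : Finset (Fin n), hwt r a S ^ 2 :=
        Finset.single_le_sum (f := fun S : Finset (Fin n) => hwt r a S ^ 2)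
          (fun S _ => sq_nonneg _) (Finset.mem_univ ∅)

lemma mass_le_card (r : ℕ) (a : ℝ) (ha0 : 0 ≤ a) (ha1 : a ≤ 1) :
    ∑ S : Finset (Fin n), hwt r a S
      ≤ ((Finset.univ.filter fun S : Finset (Fin n) => S.card ≤ r).card : ℝ) := by
  classical
  have h1 : ∀ S : Finset (Fin n), hwt r a S ≤ if S.card ≤ r then (1:ℝ) else 0 := by
    intro S
    rw [hwt]
    split
    · exact pow_le_one₀ ha0 ha1
    · exact le_refl 0
  calc ∑ S : Finset (Fin n), hwt r a S
      ≤ ∑ S : Finset (Fin n), if S.card ≤ r then (1:ℝ) else 0 :=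
        Finset.sum_le_sum fun S _ => h1 S
    _ = ((Finset.univ.filter fun S : Finset (Fin n) => S.card ≤ r).card : ℝ) := by
        rw [Finset.sum_boole]

lemma choose_mono_of_le_half {N t r : ℕ} (h : t ≤ r) (hr : 2 * r ≤ N) :
    N.choose t ≤ N.choose r := by
  induction r with
  | zero => simp [Nat.le_zero.mp h]
  | succ r ih =>
    rcases Nat.lt_or_ge t (r + 1) with hlt | hge
    · have ht : t ≤ r := Nat.lt_succ_iff.mp hlt
      have h2 : 2 * r ≤ N := by omega
      refine (ih ht h2).trans (Nat.choose_le_succ_of_lt_half_left ?_)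
      omega
    · have : t = r + 1 := by omega
      rw [this]

lemma ball_card_le (r : ℕ) (hrn : 2 * r ≤ n) :
    (Finset.univ.filter fun S : Finset (Fin n) => S.card ≤ r).card
      ≤ (r + 1) * n.choose r := by
  classical
  set B := Finset.univ.filter fun S : Finset (Fin n) => S.card ≤ r with hB
  have hfib : B.card = ∑ t ∈ Finset.range (r + 1),
      (B.filter fun S => S.card = t).card := by
    apply Finset.card_eq_sum_card_fiberwise
    intro S hS
    rw [hB] at hS
    simp only [Finset.mem_coe, Finset.mem_filter, Finset.mem_univ, true_and] at hS
    simp only [Finset.mem_coe, Finset.mem_range]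
    omega
  have hsub : ∀ t, (B.filter fun S => S.card = t).card ≤ n.choose t := by
    intro t
    have hsub2 : (B.filter fun S => S.card = t)
        ⊆ Finset.univ.filter fun S : Finset (Fin n) => S.card = t := by
      intro S hS
      simp only [hB, Finset.mem_filter, Finset.mem_univ, true_and] at hS ⊢
      exact hS.2
    have hcard : (Finset.univ.filter fun S : Finset (Fin n) => S.card = t)
        = Finset.powersetCard t (Finset.univ : Finset (Fin n)) := by
      rw [Finset.powersetCard_eq_filter, Finset.powerset_univ]
    calc (B.filter fun S => S.card = t).card
        ≤ (Finset.univ.filter fun S : Finset (Fin n) => S.card = t).card :=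
          Finset.card_le_card hsub2
      _ = n.choose t := by
          rw [hcard, Finset.card_powersetCard]
          simp
  calc B.card = ∑ t ∈ Finset.range (r + 1), (B.filter fun S => S.card = t).card := hfib
    _ ≤ ∑ t ∈ Finset.range (r + 1), n.choose r := by
        refine Finset.sum_le_sum fun t ht => ?_
        refine (hsub t).trans (choose_mono_of_le_half ?_ hrn)
        simp only [Finset.mem_range] at ht
        omega
    _ = (r + 1) * n.choose r := by
        rw [Finset.sum_const, Finset.card_range, smul_eq_mul]

lemma pow_le_factorial_mul_exp (k : ℕ) :
    (k : ℝ) ^ k ≤ (k.factorial : ℝ) * Real.exp k := by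
  induction k with
  | zero => simp
  | succ k ih =>
    rcases Nat.eq_zero_or_pos k with rfl | hk
    · have h1 : (1:ℝ) ≤ Real.exp 1 := Real.one_le_exp (by norm_num)
      simpa using h1
    · have hk0 : (0:ℝ) < k := by exact_mod_cast hk
      have h1 : ((k:ℝ) + 1) ≤ (k:ℝ) * Real.exp (1 / k) := by
        have h := Real.add_one_le_exp (1 / (k:ℝ))
        calc (k:ℝ) + 1 = (k:ℝ) * (1/(k:ℝ) + 1) := by field_simp; ring
          _ ≤ (k:ℝ) * Real.exp (1/(k:ℝ)) := mul_le_mul_of_nonneg_left h hk0.le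
      have h2 : ((k:ℝ) + 1) ^ k ≤ (k:ℝ) ^ k * Real.exp 1 := by
        calc ((k:ℝ) + 1) ^ k ≤ ((k:ℝ) * Real.exp (1/(k:ℝ))) ^ k := by
              apply pow_le_pow_left₀ (by positivity) h1
          _ = (k:ℝ) ^ k * (Real.exp (1/(k:ℝ))) ^ k := mul_pow _ _ _
          _ = (k:ℝ) ^ k * Real.exp 1 := by
              rw [← Real.exp_nat_mul]
              congr 1
              field_simp
      have hgoal : ((k:ℝ) + 1) ^ (k + 1)
          ≤ ((k:ℝ) + 1) * (k.factorial : ℝ) * (Real.exp k * Real.exp 1) := by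
        calc ((k:ℝ) + 1) ^ (k + 1) = ((k:ℝ) + 1) ^ k * ((k:ℝ) + 1) := pow_succ _ _
          _ ≤ ((k:ℝ) ^ k * Real.exp 1) * ((k:ℝ) + 1) :=
              mul_le_mul_of_nonneg_right h2 (by positivity)
          _ ≤ (((k.factorial : ℝ) * Real.exp k) * Real.exp 1) * ((k:ℝ) + 1) := by
              have := mul_le_mul_of_nonneg_right
                (mul_le_mul_of_nonneg_right ih (Real.exp_pos 1).le)
                (by positivity : (0:ℝ) ≤ (k:ℝ) + 1)
              linarith
          _ = ((k:ℝ) + 1) * (k.factorial : ℝ) * (Real.exp k * Real.exp 1) := by ring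
      push_cast [Nat.factorial_succ]
      calc ((k:ℝ) + 1) ^ (k + 1)
          ≤ ((k:ℝ) + 1) * (k.factorial : ℝ) * (Real.exp k * Real.exp 1) := hgoal
        _ = ((k:ℝ) + 1) * (k.factorial : ℝ) * Real.exp ((k:ℝ) + 1) := by
            rw [Real.exp_add]

lemma choose_le_real (r : ℕ) (hr : 1 ≤ r) :
    (n.choose r : ℝ) ≤ (n:ℝ) ^ r * Real.exp r / (r:ℝ) ^ r := by
  have hr0 : (0:ℝ) < (r:ℝ) ^ r := by
    have : (0:ℝ) < (r:ℝ) := by exact_mod_cast hr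
    positivity
  have hf0 : (0:ℝ) < (r.factorial : ℝ) := by exact_mod_cast r.factorial_pos
  have h1 : (n.choose r : ℝ) ≤ (n:ℝ) ^ r / (r.factorial : ℝ) := by
    have h := Nat.choose_le_pow_div (α := ℝ) r n
    calc (n.choose r : ℝ) ≤ ((n:ℕ) ^ r : ℝ) / (r.factorial : ℝ) := by
          exact_mod_cast h
      _ = (n:ℝ) ^ r / (r.factorial : ℝ) := by push_cast; ring
  refine h1.trans ?_
  rw [div_le_div_iff₀ hf0 hr0]
  have h2 : ((r:ℝ)) ^ r ≤ (r.factorial : ℝ) * Real.exp r := pow_le_factorial_mul_exp r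
  have h3 : (0:ℝ) ≤ (n:ℝ) ^ r := by positivity
  calc (n:ℝ) ^ r * (r:ℝ) ^ r ≤ (n:ℝ) ^ r * ((r.factorial:ℝ) * Real.exp r) :=
        mul_le_mul_of_nonneg_left h2 h3
    _ = (n:ℝ) ^ r * Real.exp r * (r.factorial:ℝ) := by ring

end RefinedMRRW

open RefinedMRRW

set_option maxHeartbeats 1000000

/-- **Refined MRRW-type bound.** Fix `c ∈ (0, 1/20)` and `ε ∈ (0, c)`. For an integer
`n > c/ε²`, any code `C ⊆ {0,1}^n` whose distinct codewords pairwise differ in at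
least a `(1/2 − ε)`-fraction of coordinates satisfies
`|C| < 2^{(23/c)·ε²·log₂(1/ε)·n}`. -/
theorem refined_MRRW_bound (c ε : ℝ) (hc0 : 0 < c) (hc : c < 1 / 20)
    (hε0 : 0 < ε) (hεc : ε < c)
    (n : ℕ) (hn : (n : ℝ) > c / ε ^ 2)
    (C : Finset (Fin n → Bool))
    (hdist : ∀ x ∈ C, ∀ y ∈ C, x ≠ y →
      (hammingDist x y : ℝ) / (n : ℝ) ≥ 1 / 2 - ε) :
    (C.card : ℝ) < (2 : ℝ) ^ (23 / c * ε ^ 2 * Real.logb 2 (1 / ε) * (n : ℝ)) := by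
  classical
  have hε20 : ε < 1 / 20 := hεc.trans hc
  have hn0 : (0 : ℝ) < n := lt_trans (div_pos hc0 (pow_pos hε0 2)) hn
  have hM' : c < ε ^ 2 * n := by
    rw [gt_iff_lt, div_lt_iff₀ (pow_pos hε0 2)] at hn
    linarith only [hn]
  obtain ⟨r, hr1, hr_lb, hr_ub⟩ : ∃ r : ℕ, 1 ≤ r ∧ 10 * ε ^ 2 * n ≤ (r : ℝ) ∧
      (r : ℝ) ≤ 10 * ε ^ 2 * n + 1 :=
    ⟨⌈10 * ε ^ 2 * (n : ℝ)⌉₊, Nat.one_le_ceil_iff.mpr (by positivity),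
      Nat.le_ceil _, (Nat.ceil_lt_add_one (by positivity)).le⟩
  have hr0R : (0 : ℝ) < r := by exact_mod_cast hr1
  have hM1 : 1 < ε ^ 2 * n / c := (one_lt_div hc0).mpr hM'
  have hr_ub2 : (r : ℝ) ≤ 1.5 * (ε ^ 2 * n / c) := by
    have h2 : 10 * ε ^ 2 * n = 10 * c * (ε ^ 2 * n / c) := by field_simp
    have h3 : (0:ℝ) ≤ (0.5 - 10 * c) * (ε ^ 2 * n / c) :=
      mul_nonneg (by linarith only [hc]) (by positivity)
    linarith only [hr_ub, h2, h3, hM1]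
  have hε2c : ε ^ 2 / c < c := by
    rw [div_lt_iff₀ hc0]
    have := mul_lt_mul' hεc.le hεc hε0.le hc0
    calc ε ^ 2 = ε * ε := sq ε
      _ < c * c := this
  have hr075 : (r : ℝ) ≤ 0.075 * n := by
    have h1 : (r:ℝ) ≤ 1.5 * (ε ^ 2 / c) * n := by
      calc (r:ℝ) ≤ 1.5 * (ε ^ 2 * n / c) := hr_ub2
        _ = 1.5 * (ε ^ 2 / c) * n := by ring
    have h4 : ε ^ 2 / c ≤ 0.05 := by linarith only [hε2c, hc]
    have h5 : (ε ^ 2 / c) * n ≤ 0.05 * n := mul_le_mul_of_nonneg_right h4 hn0.le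
    linarith only [h1, h5]
  have hnr : (0 : ℝ) < (n : ℝ) - r := by linarith only [hr075, hn0]
  have hquad : (3 * ε * (n : ℝ)) ^ 2 ≤ (r : ℝ) * ((n : ℝ) - r) := by
    have h1 : (0.925 : ℝ) * n ≤ (n : ℝ) - r := by linarith only [hr075]
    have h2 : (10 * ε ^ 2 * n) * (0.925 * n) ≤ (r : ℝ) * ((n : ℝ) - r) :=
      mul_le_mul hr_lb h1 (by positivity) (by positivity)
    have h3 : (0:ℝ) ≤ (ε * n) ^ 2 := sq_nonneg _
    nlinarith [h2, h3]
  obtain ⟨a, ha0, haq⟩ : ∃ a : ℝ, 0 < a ∧ a ^ 2 = (r : ℝ) / ((n : ℝ) - r) :=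
    ⟨Real.sqrt ((r : ℝ) / ((n : ℝ) - r)), Real.sqrt_pos.mpr (div_pos hr0R hnr),
      Real.sq_sqrt (by positivity)⟩
  have ha1 : a ≤ 1 := by
    have h1 : a ^ 2 ≤ 1 := by
      rw [haq, div_le_one hnr]
      linarith only [hr075, hn0]
    linarith only [h1, sq_nonneg (a - 1), ha0]
  have hμ0 : (0 : ℝ) ≤ 3 * ε * n := by positivity
  have hA : 3 * ε * (n : ℝ) ≤ ((n : ℝ) - r) * a := by
    have hsq : (((n : ℝ) - r) * a) ^ 2 = (r : ℝ) * ((n : ℝ) - r) := by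
      rw [mul_pow, haq]
      field_simp
    have h1 : (3 * ε * (n : ℝ)) ^ 2 ≤ (((n : ℝ) - r) * a) ^ 2 := by rw [hsq]; exact hquad
    have h2 : (0:ℝ) ≤ ((n : ℝ) - r) * a := by positivity
    calc 3 * ε * (n:ℝ) = Real.sqrt ((3 * ε * (n:ℝ)) ^ 2) := (Real.sqrt_sq hμ0).symm
      _ ≤ Real.sqrt ((((n : ℝ) - r) * a) ^ 2) := Real.sqrt_le_sqrt h1
      _ = ((n : ℝ) - r) * a := Real.sqrt_sq h2
  have hB : (3 * ε * (n : ℝ)) * a ≤ (r : ℝ) := by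
    have hsq : ((3 * ε * (n : ℝ)) * a) ^ 2 ≤ (r : ℝ) ^ 2 := by
      rw [mul_pow, haq, show (3 * ε * (n:ℝ)) ^ 2 * ((r:ℝ) / ((n:ℝ) - r))
        = (3 * ε * (n:ℝ)) ^ 2 * (r:ℝ) / ((n:ℝ) - r) by ring, div_le_iff₀ hnr]
      calc (3 * ε * (n:ℝ)) ^ 2 * (r:ℝ)
          ≤ ((r:ℝ) * ((n:ℝ) - r)) * (r:ℝ) :=
            mul_le_mul_of_nonneg_right hquad hr0R.le
        _ = (r:ℝ) ^ 2 * ((n:ℝ) - r) := by ring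
    have h2 : (0:ℝ) ≤ (3 * ε * (n : ℝ)) * a := by positivity
    calc 3 * ε * (n:ℝ) * a = Real.sqrt ((3 * ε * (n:ℝ) * a) ^ 2) := (Real.sqrt_sq h2).symm
      _ ≤ Real.sqrt ((r : ℝ) ^ 2) := Real.sqrt_le_sqrt hsq
      _ = (r : ℝ) := Real.sqrt_sq hr0R.le
  -- spectral hypothesis
  have hspec : ∀ W : Finset (Fin n), (2 * ε * n + ε * n) * hwt r a W
      ≤ ∑ i : Fin n, hwt r a (W ∆ {i}) := by
    intro W
    have h := hwt_spectral r a (3 * ε * n) ha0 hμ0 hr1 hA hB W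
    calc (2 * ε * n + ε * n) * hwt r a W = 3 * ε * n * hwt r a W := by ring
      _ ≤ _ := h
  have hpos : ∀ S : Finset (Fin n), 0 ≤ hwt r a S := hwt_nonneg r a ha0.le
  have hτn : 2 * ε * n ≤ (n : ℝ) := by
    have h1 : (0:ℝ) ≤ (1 - 2*ε) * n := mul_nonneg (by linarith only [hε20]) hn0.le
    linarith only [h1]
  have hd : ∀ x ∈ C, ∀ y ∈ C, x ≠ y → Phi d1 x y ≤ 2 * ε * n := by
    intro x hx y hy hxy
    rw [Phi_d1]
    have h1 := hdist x hx y hy hxy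
    rw [ge_iff_le, le_div_iff₀ hn0] at h1
    have h2 : (1 / 2 - ε) * n = n/2 - ε * n := by ring
    rw [h2] at h1
    linarith only [h1]
  have lower := core_lower C (hwt r a) hpos (2 * ε * n) (ε * n) (by positivity) hspec
  have upper := core_upper C (hwt r a) (2 * ε * n) hτn hd
  -- combine
  set N : ℝ := (C.card : ℝ) with hN
  have hN0 : 0 ≤ N := Nat.cast_nonneg _
  set g0 : ℝ := ∑ S : Finset (Fin n), hwt r a S with hg0
  set Bc : ℝ := ((Finset.univ.filter fun S : Finset (Fin n) => S.card ≤ r).card : ℝ)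
    with hBc
  have hg0nn : 0 ≤ g0 := Finset.sum_nonneg fun S _ => hpos S
  have hg0Bc : g0 ≤ Bc := mass_le_card r a ha0.le ha1
  have hBc0 : 0 ≤ Bc := hg0nn.trans hg0Bc
  have hH1 : (1 : ℝ) ≤ conv (hwt r a) (hwt r a) (∅ : Finset (Fin n)) :=
    conv_self_empty_ge_one r a ha0.le
  have key : ε * n * N ^ 2 ≤ N * ((n : ℝ) * Bc ^ 2) := by
    have hεn0 : (0:ℝ) ≤ ε * n := by positivity
    have h1 : ε * n * N ^ 2
        ≤ ε * n * conv (hwt r a) (hwt r a) (∅ : Finset (Fin n)) * N ^ 2 := by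
      have ha' : ε * n * 1 ≤ ε * n * conv (hwt r a) (hwt r a) (∅ : Finset (Fin n)) :=
        mul_le_mul_of_nonneg_left hH1 hεn0
      have hb' := mul_le_mul_of_nonneg_right ha' (sq_nonneg N)
      calc ε * n * N ^ 2 = (ε * n * 1) * N ^ 2 := by ring
        _ ≤ _ := hb'
    have hg2 : g0 ^ 2 ≤ Bc ^ 2 := pow_le_pow_left₀ hg0nn hg0Bc 2
    have h2 : ((n : ℝ) - 2 * ε * n) * g0 ^ 2 ≤ (n : ℝ) * Bc ^ 2 := by
      have h2a : ((n : ℝ) - 2 * ε * n) * g0 ^ 2 ≤ (n : ℝ) * g0 ^ 2 := by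
        have : (0:ℝ) ≤ 2 * ε * n := by positivity
        exact mul_le_mul_of_nonneg_right (by linarith only [this]) (sq_nonneg g0)
      have h2b : (n : ℝ) * g0 ^ 2 ≤ (n : ℝ) * Bc ^ 2 :=
        mul_le_mul_of_nonneg_left hg2 hn0.le
      linarith only [h2a, h2b]
    have h3 : N * (((n : ℝ) - 2 * ε * n) * g0 ^ 2) ≤ N * ((n : ℝ) * Bc ^ 2) :=
      mul_le_mul_of_nonneg_left h2 hN0
    calc ε * n * N ^ 2
        ≤ ε * n * conv (hwt r a) (hwt r a) (∅ : Finset (Fin n)) * N ^ 2 := h1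
      _ ≤ ∑ x ∈ C, ∑ y ∈ C, (Phi d1 x y - 2 * ε * n) * (Phi (hwt r a) x y) ^ 2 := lower
      _ ≤ N * (((n : ℝ) - 2 * ε * n) * g0 ^ 2) := upper
      _ ≤ N * ((n : ℝ) * Bc ^ 2) := h3
  clear lower upper hspec hd hdist hg0Bc hg0nn hH1
  -- dispose of the empty case
  rcases Finset.eq_empty_or_nonempty C with hCe | hCne
  · rw [hN, hCe]
    simp only [Finset.card_empty, Nat.cast_zero]
    positivity
  have hN1 : 1 ≤ N := by
    rw [hN]
    exact_mod_cast Finset.card_pos.mpr hCne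
  have hεN : ε * N ≤ Bc ^ 2 := by
    have hnN : (0:ℝ) < (n : ℝ) * N := by positivity
    have h1 : (ε * N) * ((n : ℝ) * N) ≤ Bc ^ 2 * ((n : ℝ) * N) := by
      have e1 : (ε * N) * ((n : ℝ) * N) = ε * n * N ^ 2 := by ring
      have e2 : Bc ^ 2 * ((n : ℝ) * N) = N * ((n : ℝ) * Bc ^ 2) := by ring
      rw [e1, e2]
      exact key
    exact le_of_mul_le_mul_right h1 hnN
  have hNle : N ≤ 1 / ε * Bc ^ 2 := by
    rw [show (1:ℝ) / ε * Bc ^ 2 = Bc ^ 2 / ε by ring, le_div_iff₀ hε0]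
    calc N * ε = ε * N := by ring
      _ ≤ Bc ^ 2 := hεN
  -- final numeric bound
  set L : ℝ := Real.logb 2 (1 / ε) with hL
  set M : ℝ := ε ^ 2 * n / c with hMdef
  have hεinv : (16 : ℝ) ≤ 1 / ε := by
    rw [le_div_iff₀ hε0]
    linarith only [hε20, hε0]
  have h2L : (2 : ℝ) ^ L = 1 / ε := Real.rpow_logb (by norm_num) (by norm_num)
    (by positivity)
  have hL4 : (4 : ℝ) ≤ L := by
    have h16 : Real.logb 2 (16 : ℝ) ≤ L := by
      rw [hL]
      exact Real.logb_le_logb_of_le (by norm_num) (by norm_num) hεinv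
    have h164 : Real.logb 2 (16 : ℝ) = 4 := by
      rw [show (16 : ℝ) = 2 ^ (4 : ℝ) by
        rw [show (4:ℝ) = ((4:ℕ):ℝ) by norm_num, Real.rpow_natCast]; norm_num,
        Real.logb_rpow (by norm_num) (by norm_num)]
    linarith only [h16, h164]
  have hL0 : (0 : ℝ) < L := by linarith only [hL4]
  have hM0 : (0 : ℝ) < M := by positivity
  have hMge : (1 : ℝ) ≤ M := hM1.le
  have hP0 : (0 : ℝ) < M * L := by positivity
  have e1 : 1 / ε ≤ (2 : ℝ) ^ (M * L) := by
    rw [← h2L]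
    refine Real.rpow_le_rpow_left_iff (by norm_num : (1:ℝ) < 2) |>.mpr ?_
    have := mul_le_mul_of_nonneg_right hMge hL0.le
    linarith only [this]
  have hr1R : (r : ℝ) + 1 ≤ 2.5 * M := by
    have h1 : (r:ℝ) ≤ 1.5 * M := hr_ub2
    linarith only [h1, hMge]
  have e2' : (r : ℝ) + 1 ≤ (2 : ℝ) ^ (M * L) := by
    have h4M : (2.5 : ℝ) * M ≤ (2 : ℝ) ^ (4 * M) := by
      have hexp : (2 : ℝ) ^ (4 * M) = Real.exp (Real.log 2 * (4 * M)) :=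
        Real.rpow_def_of_pos (by norm_num) _
      have hlog : (0.6931471803 : ℝ) < Real.log 2 := Real.log_two_gt_d9
      have hle : Real.log 2 * (4 * M) + 1 ≤ Real.exp (Real.log 2 * (4 * M)) :=
        Real.add_one_le_exp _
      have hp : (0.6931471803 : ℝ) * M ≤ Real.log 2 * M :=
        mul_le_mul_of_nonneg_right hlog.le hM0.le
      rw [hexp]
      linarith only [hle, hp, hM0]
    have h4ML : (2 : ℝ) ^ (4 * M) ≤ (2 : ℝ) ^ (M * L) := by
      refine Real.rpow_le_rpow_left_iff (by norm_num : (1:ℝ) < 2) |>.mpr ?_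
      have := mul_le_mul_of_nonneg_left hL4 hM0.le
      linarith only [this]
    linarith only [hr1R, h4M, h4ML]
  -- the (en/r)^r bound
  have hbase : Real.exp 1 * n / r ≤ (1 / ε) ^ 2 := by
    have he : Real.exp 1 ≤ 3 := by
      have := Real.exp_one_lt_d9
      linarith only [this]
    have hnn : (0:ℝ) ≤ ε ^ 2 * n := by positivity
    have h3 : Real.exp 1 * (ε ^ 2 * n) ≤ 3 * (ε ^ 2 * n) :=
      mul_le_mul_of_nonneg_right he hnn
    rw [div_le_iff₀ hr0R, show ((1:ℝ)/ε) ^ 2 = 1 / ε ^ 2 by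
      rw [div_pow, one_pow], div_mul_eq_mul_div, le_div_iff₀ (pow_pos hε0 2)]
    calc Real.exp 1 * (n:ℝ) * ε ^ 2 = Real.exp 1 * (ε ^ 2 * n) := by ring
      _ ≤ 3 * (ε ^ 2 * n) := h3
      _ ≤ 10 * ε ^ 2 * n := by linarith only [hnn]
      _ ≤ (r:ℝ) := hr_lb
      _ = 1 * (r:ℝ) := (one_mul _).symm
  have hbase0 : 0 ≤ Real.exp 1 * n / r := by positivity
  have hD : (n:ℝ) ^ r * Real.exp r / (r:ℝ) ^ r = (Real.exp 1 * n / r) ^ r := by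
    rw [div_pow, mul_pow, ← Real.exp_nat_mul, mul_one]
    ring
  have hDle : (n:ℝ) ^ r * Real.exp r / (r:ℝ) ^ r ≤ (1 / ε) ^ (2 * r) := by
    rw [hD, pow_mul]
    exact pow_le_pow_left₀ hbase0 hbase r
  have hchoose : (n.choose r : ℝ) ≤ (1 / ε) ^ (2 * r) :=
    (choose_le_real r hr1).trans hDle
  have h2rn : 2 * r ≤ n := by
    have h1 : 2 * (r : ℝ) ≤ (n : ℝ) := by linarith only [hr075, hn0]
    exact_mod_cast h1
  have hBcle : Bc ≤ ((r : ℝ) + 1) * (1 / ε) ^ (2 * r) := by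
    have h1 : Bc ≤ (((r + 1) * n.choose r : ℕ) : ℝ) := by
      rw [hBc]
      exact_mod_cast ball_card_le r h2rn
    have h2 : (((r + 1) * n.choose r : ℕ) : ℝ) = ((r:ℝ) + 1) * (n.choose r : ℝ) := by
      push_cast; ring
    rw [h2] at h1
    refine h1.trans ?_
    exact mul_le_mul_of_nonneg_left hchoose (by positivity)
  have hpow_eq : ((1 / ε) : ℝ) ^ (2 * r) = (2 : ℝ) ^ (L * (2 * r : ℕ)) := by
    rw [← h2L, ← Real.rpow_natCast ((2:ℝ) ^ L) (2 * r), ← Real.rpow_mul (by norm_num)]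
  have hpowle : (2 : ℝ) ^ (L * (2 * r : ℕ)) ≤ (2 : ℝ) ^ (3 * (M * L)) := by
    refine Real.rpow_le_rpow_left_iff (by norm_num : (1:ℝ) < 2) |>.mpr ?_
    have hc1 : ((2 * r : ℕ) : ℝ) = 2 * (r : ℝ) := by push_cast; ring
    rw [hc1]
    have := mul_le_mul_of_nonneg_left hr_ub2 hL0.le
    linarith only [this]
  have hBfin2 : Bc ≤ (2 : ℝ) ^ (4 * (M * L)) := by
    have hBfin : Bc ≤ (2 : ℝ) ^ (M * L) * (2 : ℝ) ^ (3 * (M * L)) := by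
      calc Bc ≤ ((r : ℝ) + 1) * (1 / ε) ^ (2 * r) := hBcle
        _ ≤ (2 : ℝ) ^ (M * L) * (2 : ℝ) ^ (3 * (M * L)) := by
            rw [hpow_eq]
            exact mul_le_mul e2' hpowle (by positivity) (by positivity)
    refine hBfin.trans (le_of_eq ?_)
    rw [← Real.rpow_add (by norm_num : (0:ℝ) < 2)]
    congr 1
    ring
  -- put it all together
  have final : N < (2 : ℝ) ^ (23 * (M * L)) := by
    have h2 : Bc ^ 2 ≤ ((2 : ℝ) ^ (4 * (M * L))) ^ 2 := pow_le_pow_left₀ hBc0 hBfin2 2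
    have h3 : ((2 : ℝ) ^ (4 * (M * L))) ^ 2 = (2 : ℝ) ^ (8 * (M * L)) := by
      rw [← Real.rpow_natCast ((2:ℝ) ^ (4 * (M * L))) 2,
        ← Real.rpow_mul (by norm_num)]
      congr 1
      push_cast
      ring
    have h4 : N ≤ (2 : ℝ) ^ (M * L) * (2 : ℝ) ^ (8 * (M * L)) := by
      calc N ≤ 1 / ε * Bc ^ 2 := hNle
        _ ≤ (2 : ℝ) ^ (M * L) * (2 : ℝ) ^ (8 * (M * L)) := by
            rw [← h3]
            exact mul_le_mul e1 h2 (by positivity) (by positivity)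
    have h5 : (2 : ℝ) ^ (M * L) * (2 : ℝ) ^ (8 * (M * L))
        = (2 : ℝ) ^ (9 * (M * L)) := by
      rw [← Real.rpow_add (by norm_num : (0:ℝ) < 2)]
      congr 1
      ring
    have h6 : (2 : ℝ) ^ (9 * (M * L)) < (2 : ℝ) ^ (23 * (M * L)) := by
      refine Real.rpow_lt_rpow_left_iff (by norm_num : (1:ℝ) < 2) |>.mpr ?_
      linarith only [hP0]
    calc N ≤ (2 : ℝ) ^ (M * L) * (2 : ℝ) ^ (8 * (M * L)) := h4
      _ = (2 : ℝ) ^ (9 * (M * L)) := h5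
      _ < (2 : ℝ) ^ (23 * (M * L)) := h6
  have hexp_eq : 23 / c * ε ^ 2 * Real.logb 2 (1 / ε) * (n : ℝ) = 23 * (M * L) := by
    rw [hMdef, hL]
    field_simp
  rw [hexp_eq]
  exact final
end

section
/- Fix a constant c ∈ (0, 1/20), let ε ∈ (0, c), and let n be an integer with n > c/ε². Let r be an integer with 9ε²n/c ≤ r ≤ 10ε²n/c, and let B = {x ∈ {0,1}^n : the Hamming weight of x is r or r+1}. Then there exists a function f : {0,1}^n → ℝ, not identically zero, supported on B (f(x) = 0 for all x ∉ B), such that Σ_{x,y adjacent} f(x)·f(y) > 3εn · Σ_x f(x)², where the first sum ranges over ordered pairs (x,y) ∈ {0,1}^n × {0,1}^n that differ in exactly one coordinate. -/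
open Finset

section Aux
variable {n : ℕ}

def hwt (x : Fin n → Bool) : ℕ := ((Finset.univ : Finset (Fin n)).filter fun i => x i = true).card

lemma hwt_update_true (x : Fin n → Bool) (i : Fin n) (h : x i = true) :
    hwt (Function.update x i (!x i)) = hwt x - 1 := by
  have : ((Finset.univ : Finset (Fin n)).filter fun j => Function.update x i (!x i) j = true)
      = ((Finset.univ : Finset (Fin n)).filter fun j => x j = true).erase i := by
    ext j
    rcases eq_or_ne j i with rfl | hj
    · simp [Function.update_self, h]
    · simp [Function.update_of_ne hj, hj]
  rw [hwt, this, Finset.card_erase_of_mem (by simp [h])]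
  rfl

lemma hwt_update_false (x : Fin n → Bool) (i : Fin n) (h : x i = false) :
    hwt (Function.update x i (!x i)) = hwt x + 1 := by
  have : ((Finset.univ : Finset (Fin n)).filter fun j => Function.update x i (!x i) j = true)
      = insert i (((Finset.univ : Finset (Fin n)).filter fun j => x j = true)) := by
    ext j
    rcases eq_or_ne j i with rfl | hj
    · simp [Function.update_self, h]
    · simp [Function.update_of_ne hj, hj]
  rw [hwt, this, Finset.card_insert_of_notMem (by simp [h])]
  rfl

lemma card_false_filter (x : Fin n → Bool) :
    ((Finset.univ : Finset (Fin n)).filter fun i => ¬ x i = true).card = n - hwt x := by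
  have := Finset.card_filter_add_card_filter_not
    (s := (Finset.univ : Finset (Fin n))) (p := fun i => x i = true)
  simp only [Finset.card_univ, Fintype.card_fin] at this
  unfold hwt
  omega

lemma neighbor_iff (x y : Fin n → Bool) :
    hammingDist x y = 1 ↔ ∃ i, y = Function.update x i (!x i) := by
  constructor
  · intro h
    rw [hammingDist, Finset.card_eq_one] at h
    obtain ⟨i, hi⟩ := h
    refine ⟨i, funext fun j => ?_⟩
    rcases eq_or_ne j i with rfl | hj
    · have : j ∈ ({j} : Finset (Fin n)) := Finset.mem_singleton_self j
      rw [← hi, Finset.mem_filter] at this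
      have := this.2
      simp only [Function.update_self]
      cases hx : x j <;> cases hy : y j <;> simp_all
    · have : j ∉ ({i} : Finset (Fin n)) := by simp [hj]
      rw [← hi, Finset.mem_filter] at this
      push_neg at this
      have h2 := this (Finset.mem_univ j)
      rw [Function.update_of_ne hj]
      exact h2.symm
  · rintro ⟨i, rfl⟩
    rw [hammingDist]
    have : ((Finset.univ : Finset (Fin n)).filter fun j => x j ≠ Function.update x i (!x i) j) = {i} := by
      ext j
      rcases eq_or_ne j i with rfl | hj
      · simp [Function.update_self]
      · simp [Function.update_of_ne hj, hj]
    rw [this, Finset.card_singleton]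

lemma sum_neighbors (x : Fin n → Bool) (F : (Fin n → Bool) → ℝ) :
    (∑ y : Fin n → Bool, if hammingDist x y = 1 then F y else 0)
      = ∑ i : Fin n, F (Function.update x i (!x i)) := by
  rw [← Finset.sum_filter]
  have himg : ((Finset.univ : Finset (Fin n → Bool)).filter fun y => hammingDist x y = 1)
      = Finset.image (fun i => Function.update x i (!x i)) Finset.univ := by
    ext y
    simp only [Finset.mem_filter, Finset.mem_univ, true_and, Finset.mem_image, neighbor_iff]
    constructor
    · rintro ⟨i, h⟩; exact ⟨i, h.symm⟩
    · rintro ⟨i, h⟩; exact ⟨i, h.symm⟩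
  rw [himg, Finset.sum_image]
  intro i _ j _ hij
  by_contra hne
  have := congrFun hij i
  beta_reduce at this; rw [Function.update_self] at this
  rw [Function.update_of_ne hne] at this
  cases x i <;> simp_all

end Aux

set_option maxHeartbeats 1000000 in
/-- **Eigenvalue lower bound for Hamming levels `{r, r+1}`.** Fix `c ∈ (0, 1/20)`,
`ε ∈ (0, c)`, an integer `n > c/ε²`, and an integer `r` with
`9ε²n/c ≤ r ≤ 10ε²n/c`. Then there is a nonzero function `f : {0,1}^n → ℝ`
supported on `B = {x : weight(x) ∈ {r, r+1}}` with
`Σ_{x,y adjacent} f(x)f(y) > 3εn · Σ_x f(x)²`, the first sum ranging over ordered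
pairs differing in exactly one coordinate. -/
theorem hamming_levels_eigenvalue_bound (c ε : ℝ) (hc0 : 0 < c) (hc : c < 1 / 20)
    (hε0 : 0 < ε) (hεc : ε < c)
    (n : ℕ) (hn : (n : ℝ) > c / ε ^ 2)
    (r : ℕ) (hr1 : 9 * ε ^ 2 * (n : ℝ) / c ≤ (r : ℝ))
    (hr2 : (r : ℝ) ≤ 10 * ε ^ 2 * (n : ℝ) / c) :
    ∃ f : (Fin n → Bool) → ℝ, f ≠ 0 ∧
      (∀ x : Fin n → Bool,
        ((Finset.univ.filter fun i => x i = true).card ≠ r ∧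
         (Finset.univ.filter fun i => x i = true).card ≠ r + 1) → f x = 0) ∧
      (∑ x : Fin n → Bool, ∑ y : Fin n → Bool,
          if hammingDist x y = 1 then f x * f y else 0) >
        3 * ε * (n : ℝ) * ∑ x : Fin n → Bool, f x ^ 2 := by
  -- numeric facts
  have hεn : c < ε ^ 2 * n := by
    rw [gt_iff_lt, div_lt_iff₀ (by positivity)] at hn; linarith
  have h1 : 9 * ε ^ 2 * n ≤ c * r := by
    rw [div_le_iff₀ hc0] at hr1; linarith
  have h2 : c * (r : ℝ) ≤ 10 * ε ^ 2 * n := by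
    rw [le_div_iff₀ hc0] at hr2; linarith
  have hn0 : (0 : ℝ) < n := lt_trans (by positivity) hn
  have hε2εc : ε ^ 2 < ε * c := by nlinarith
  have hrhalf : (r : ℝ) < n / 2 := by nlinarith
  have hr9 : (9 : ℝ) < r := by nlinarith
  have hrn : r ≤ n := by
    have : (r : ℝ) < n := by linarith
    exact_mod_cast this.le
  have hr1nat : 1 ≤ r := by
    have : (1 : ℝ) < r := by linarith
    exact_mod_cast this.le
  have hcastnr : ((n - r : ℕ) : ℝ) = (n : ℝ) - r := by
    rw [Nat.cast_sub hrn]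
  have hnrpos : (0 : ℝ) < (n : ℝ) - r := by linarith
  -- the function
  set a : ℝ := Real.sqrt ((n : ℝ) - r) with ha_def
  set b : ℝ := Real.sqrt ((r : ℝ) + 1) with hb_def
  have ha0 : 0 < a := Real.sqrt_pos.mpr hnrpos
  have hb0 : 0 < b := Real.sqrt_pos.mpr (by positivity)
  have ha2 : a ^ 2 = (n : ℝ) - r := Real.sq_sqrt hnrpos.le
  have hb2 : b ^ 2 = (r : ℝ) + 1 := Real.sq_sqrt (by positivity)
  set f : (Fin n → Bool) → ℝ :=
    fun x => if hwt x = r then a else if hwt x = r + 1 then b else 0 with hf_def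
  -- a point of weight r
  obtain ⟨s, -, hscard⟩ := Finset.exists_subset_card_eq
    (by simpa using hrn : r ≤ (Finset.univ : Finset (Fin n)).card)
  set x0 : Fin n → Bool := fun i => decide (i ∈ s) with hx0
  have hwx0 : hwt x0 = r := by
    rw [hwt]
    rw [show ((Finset.univ : Finset (Fin n)).filter fun i => x0 i = true) = s by
      ext i; simp [hx0]]
    exact hscard
  refine ⟨f, ?_, ?_, ?_⟩
  · intro h
    have := congrFun h x0
    simp only [hf_def, hwx0, if_pos rfl, Pi.zero_apply] at this
    exact ha0.ne' this
  · intro x ⟨hx1, hx2⟩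
    have hx1' : hwt x ≠ r := hx1
    have hx2' : hwt x ≠ r + 1 := hx2
    simp only [hf_def]
    rw [if_neg hx1', if_neg hx2']
  · -- pointwise inner sum
    have hpoint : ∀ x : Fin n → Bool,
        (f x * ∑ i : Fin n, f (Function.update x i (!x i)))
          = (if hwt x = r then a * b * ((n : ℝ) - r) else 0)
            + (if hwt x = r + 1 then a * b * ((r : ℝ) + 1) else 0) := by
      intro x
      have hsplit := Finset.sum_filter_add_sum_filter_not
        (Finset.univ : Finset (Fin n)) (fun i => x i = true)
        (fun i => f (Function.update x i (!x i)))
      rw [← hsplit]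
      have htrue : ∀ i ∈ (Finset.univ : Finset (Fin n)).filter fun i => x i = true,
          f (Function.update x i (!x i)) = (if hwt x - 1 = r then a else if hwt x - 1 = r + 1 then b else 0) := by
        intro i hi
        rw [hf_def]
        simp only
        rw [hwt_update_true x i (by simpa using hi)]
      have hfalse : ∀ i ∈ (Finset.univ : Finset (Fin n)).filter fun i => ¬ x i = true,
          f (Function.update x i (!x i)) = (if hwt x + 1 = r then a else if hwt x + 1 = r + 1 then b else 0) := by
        intro i hi
        rw [hf_def]
        simp only
        rw [hwt_update_false x i (by simpa using (Finset.mem_filter.mp hi).2)]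
      rw [Finset.sum_congr rfl htrue, Finset.sum_congr rfl hfalse,
        Finset.sum_const, Finset.sum_const, card_false_filter]
      have hcardtrue : ((Finset.univ : Finset (Fin n)).filter fun i => x i = true).card = hwt x := rfl
      rw [hcardtrue]
      rcases eq_or_ne (hwt x) r with hw | hw
      · have e1 : r - 1 ≠ r := by omega
        have e2 : r - 1 ≠ r + 1 := by omega
        have e3 : r + 1 ≠ r := by omega
        have e4 : r ≠ r + 1 := by omega
        simp only [hf_def]
        rw [hw]
        simp only [if_pos rfl, if_neg e1, if_neg e2, if_neg e3, if_neg e4,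
          eq_self_iff_true, if_true, smul_zero, nsmul_eq_mul, zero_add]
        rw [hcastnr]
        ring
      · rcases eq_or_ne (hwt x) (r + 1) with hw2 | hw2
        · have e1 : r + 1 - 1 = r := by omega
          have e2 : r + 1 + 1 ≠ r := by omega
          have e3 : r + 1 + 1 ≠ r + 1 := by omega
          have e4 : r + 1 ≠ r := by omega
          simp only [hf_def]
          rw [hw2]
          simp only [e1, if_pos rfl, if_neg e2, if_neg e3, if_neg e4,
            eq_self_iff_true, if_true, smul_zero, nsmul_eq_mul, add_zero, zero_add]
          push_cast
          ring
        · have hfx : f x = 0 := by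
            simp only [hf_def]; rw [if_neg hw, if_neg hw2]
          rw [hfx, if_neg hw, if_neg hw2]
          ring
    -- rewrite LHS
    have hLHS : (∑ x : Fin n → Bool, ∑ y : Fin n → Bool,
          if hammingDist x y = 1 then f x * f y else 0)
        = ∑ x : Fin n → Bool,
            ((if hwt x = r then a * b * ((n : ℝ) - r) else 0)
              + (if hwt x = r + 1 then a * b * ((r : ℝ) + 1) else 0)) := by
      refine Finset.sum_congr rfl fun x _ => ?_
      have step : (∑ y : Fin n → Bool, if hammingDist x y = 1 then f x * f y else 0)
          = f x * ∑ y : Fin n → Bool, if hammingDist x y = 1 then f y else 0 := by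
        rw [Finset.mul_sum]
        refine Finset.sum_congr rfl fun y _ => ?_
        by_cases h : hammingDist x y = 1 <;> simp [h]
      rw [step, sum_neighbors, hpoint]
    have hRHS : (∑ x : Fin n → Bool, f x ^ 2)
        = ∑ x : Fin n → Bool,
            ((if hwt x = r then ((n : ℝ) - r) else 0)
              + (if hwt x = r + 1 then ((r : ℝ) + 1) else 0)) := by
      refine Finset.sum_congr rfl fun x _ => ?_
      simp only [hf_def]
      rcases eq_or_ne (hwt x) r with hw | hw
      · rw [if_pos hw, if_pos hw, if_neg (by omega), ha2]; ring
      · rcases eq_or_ne (hwt x) (r + 1) with hw2 | hw2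
        · rw [if_neg hw, if_neg hw, if_pos hw2, if_pos hw2, hb2]; ring
        · rw [if_neg hw, if_neg hw, if_neg hw2, if_neg hw2]; ring
    have hsum1 : ∀ C : ℝ, (∑ x : Fin n → Bool, if hwt x = r then C else 0)
        = ((((Finset.univ : Finset (Fin n → Bool)).filter fun x => hwt x = r).card : ℝ)) * C := by
      intro C
      rw [← Finset.sum_filter, Finset.sum_const, nsmul_eq_mul]
    have hsum2 : ∀ C : ℝ, (∑ x : Fin n → Bool, if hwt x = r + 1 then C else 0)
        = ((((Finset.univ : Finset (Fin n → Bool)).filter fun x => hwt x = r + 1).card : ℝ)) * C := by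
      intro C
      rw [← Finset.sum_filter, Finset.sum_const, nsmul_eq_mul]
    have hN1 : (1 : ℝ) ≤ ((((Finset.univ : Finset (Fin n → Bool)).filter fun x => hwt x = r).card : ℕ) : ℝ) := by
      have hmem : x0 ∈ (Finset.univ : Finset (Fin n → Bool)).filter fun x => hwt x = r := by
        simp [hwx0]
      have h := Finset.card_pos.mpr ⟨x0, hmem⟩
      have h2 : 1 ≤ ((Finset.univ : Finset (Fin n → Bool)).filter fun x => hwt x = r).card := h
      exact_mod_cast h2
    have hN2 : (0 : ℝ) ≤ ((((Finset.univ : Finset (Fin n → Bool)).filter fun x => hwt x = r + 1).card : ℕ) : ℝ) :=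
      Nat.cast_nonneg _
    rw [hLHS, hRHS, Finset.sum_add_distrib, Finset.sum_add_distrib,
      hsum1, hsum2, hsum1, hsum2]
    set N1 : ℝ := (((Finset.univ : Finset (Fin n → Bool)).filter fun x => hwt x = r).card : ℝ) with hN1def
    set N2 : ℝ := (((Finset.univ : Finset (Fin n → Bool)).filter fun x => hwt x = r + 1).card : ℝ) with hN2def
    clear_value N1 N2
    have hrpos : (0 : ℝ) < r := by linarith
    have hS : (0 : ℝ) < N1 * ((n : ℝ) - r) + N2 * ((r : ℝ) + 1) := by nlinarith
    have k1 : 9 * ε ^ 2 * (n : ℝ) * n ≤ c * ((r : ℝ) * n) := by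
      nlinarith [mul_le_mul_of_nonneg_right h1 hn0.le]
    have k2 : c * ((r : ℝ) * n) < (1 / 20) * ((r : ℝ) * n) :=
      mul_lt_mul_of_pos_right hc (mul_pos hrpos hn0)
    have k3 : (1 / 20) * ((r : ℝ) * n) < ((n : ℝ) - r) * ((r : ℝ) + 1) := by
      nlinarith [mul_lt_mul_of_pos_right (show (n : ℝ) / 2 < (n : ℝ) - r by linarith) hrpos,
        mul_pos hrpos hn0, hnrpos]
    have key : (3 * ε * (n : ℝ)) ^ 2 < ((n : ℝ) - r) * ((r : ℝ) + 1) := by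
      nlinarith [k1, k2, k3]
    have habsq : (3 * ε * (n : ℝ)) ^ 2 < (a * b) ^ 2 := by
      rw [mul_pow a b 2, ha2, hb2]; exact key
    have hab : 3 * ε * (n : ℝ) < a * b :=
      lt_of_pow_lt_pow_left₀ 2 (mul_pos ha0 hb0).le habsq
    linarith [mul_lt_mul_of_pos_right hab hS]
end
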